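/- arXiv:2403.08054 — 4 statements merged into one kernel-verified Lean document; each statement's English description precedes it below -/
import Mathlib

section
/- (Combined one-step lower bound.) Let h : [t₀, t₀+T_pre) → ℝ be differentiable, g : [t₀, t₀+T_pre) → ℝ continuous, and c, c' ∈ ℝ. Suppose h'(t) + c·φ(t)·h(t) = g(t) for all t ∈ [t₀, t₀+T_pre) and g(t) ≥ g(t₀)·exp(−c' ∫_{t₀}^{t} φ(s) ds) for all t ∈ [t₀, t₀+T_pre). Then for all t ∈ [t₀, t₀+T_pre): h(t) ≥ g(t₀)·∫_{t₀}^{t} exp(−[c ∫_{τ}^{t} φ(s) ds + c' ∫_{t₀}^{τ} φ(s) ds]) dτ + h(t₀)·exp(−c ∫_{t₀}^{t} φ(s) ds). -/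
noncomputable def blowup (t₀ Tpre α : ℝ) (t : ℝ) : ℝ :=
  (Tpre ^ 2 + α * ((t - t₀) ^ 2 - (t - t₀) * Tpre) ^ 2) / (Tpre + t₀ - t) ^ 2

theorem combined_one_step_lower_bound (t₀ Tpre α : ℝ) (hT : 0 < Tpre) (hα : 0 ≤ α)
    (h h' g : ℝ → ℝ) (c c' : ℝ)
    (hderiv : ∀ t ∈ Set.Ico t₀ (t₀ + Tpre), HasDerivAt h (h' t) t)
    (hg : ContinuousOn g (Set.Ico t₀ (t₀ + Tpre)))
    (hode : ∀ t ∈ Set.Ico t₀ (t₀ + Tpre),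
      h' t + c * blowup t₀ Tpre α t * h t = g t)
    (hglb : ∀ t ∈ Set.Ico t₀ (t₀ + Tpre),
      g t ≥ g t₀ * Real.exp (-c' * ∫ s in t₀..t, blowup t₀ Tpre α s)) :
    ∀ t ∈ Set.Ico t₀ (t₀ + Tpre),
      h t ≥ g t₀ * (∫ τ in t₀..t,
          Real.exp (-(c * (∫ s in τ..t, blowup t₀ Tpre α s) +
            c' * ∫ s in t₀..τ, blowup t₀ Tpre α s))) +
        h t₀ * Real.exp (-c * ∫ s in t₀..t, blowup t₀ Tpre α s) := by
  set φ : ℝ → ℝ := blowup t₀ Tpre α with hφdef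
  -- continuity of φ on Iio (t₀ + Tpre)
  have hφca : ∀ x ∈ Set.Iio (t₀ + Tpre), ContinuousAt φ x := by
    intro x hx
    apply ContinuousAt.div (by fun_prop) (by fun_prop)
    have : Tpre + t₀ - x ≠ 0 := by simp only [Set.mem_Iio] at hx; intro hc; linarith
    positivity
  have hφco : ContinuousOn φ (Set.Iio (t₀ + Tpre)) := fun x hx =>
    (hφca x hx).continuousWithinAt
  set Φ : ℝ → ℝ := fun u => ∫ s in t₀..u, φ s with hΦdef
  intro t ht
  obtain ⟨hta, htb⟩ := ht
  have hIccIio : Set.Icc t₀ t ⊆ Set.Iio (t₀ + Tpre) := fun x hx => by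
    simp only [Set.mem_Iio]; exact lt_of_le_of_lt hx.2 htb
  have hIccIco : Set.Icc t₀ t ⊆ Set.Ico t₀ (t₀ + Tpre) := fun x hx =>
    ⟨hx.1, lt_of_le_of_lt hx.2 htb⟩
  have hφint : ∀ u v, u ∈ Set.Icc t₀ t → v ∈ Set.Icc t₀ t →
      IntervalIntegrable φ MeasureTheory.volume u v := by
    intro u v hu hv
    apply ContinuousOn.intervalIntegrable
    apply hφco.mono
    intro x hx
    rcases Set.mem_uIcc.mp hx with hx | hx
    · exact hIccIio ⟨le_trans hu.1 hx.1, le_trans hx.2 hv.2⟩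
    · exact hIccIio ⟨le_trans hv.1 hx.1, le_trans hx.2 hu.2⟩
  have hφintIio : ∀ u v, u ∈ Set.Iio (t₀ + Tpre) → v ∈ Set.Iio (t₀ + Tpre) →
      IntervalIntegrable φ MeasureTheory.volume u v := by
    intro u v hu hv
    apply ContinuousOn.intervalIntegrable
    apply hφco.mono
    intro x hx
    rcases Set.mem_uIcc.mp hx with hx | hx
    · exact lt_of_le_of_lt hx.2 hv
    · exact lt_of_le_of_lt hx.2 hu
  have hΦderiv : ∀ τ ∈ Set.Iio (t₀ + Tpre), HasDerivAt Φ (φ τ) τ := by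
    intro τ hτ
    exact intervalIntegral.integral_hasDerivAt_right
      (hφintIio t₀ τ (by simp only [Set.mem_Iio]; linarith) hτ)
      (hφco.stronglyMeasurableAtFilter isOpen_Iio τ hτ)
      (hφca τ hτ)
  have hΦca : ∀ τ ∈ Set.Iio (t₀ + Tpre), ContinuousAt Φ τ := fun τ hτ =>
    (hΦderiv τ hτ).continuousAt
  -- the auxiliary integrand and integral
  set E : ℝ → ℝ := fun τ => Real.exp ((c - c') * Φ τ) with hEdef
  have hEca : ∀ τ ∈ Set.Iio (t₀ + Tpre), ContinuousAt E τ := fun τ hτ =>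
    (Real.continuous_exp.continuousAt).comp ((continuousAt_const.mul (hΦca τ hτ)))
  have hEco : ContinuousOn E (Set.Iio (t₀ + Tpre)) := fun x hx => (hEca x hx).continuousWithinAt
  set G : ℝ → ℝ := fun u => ∫ s in t₀..u, E s with hGdef
  have hEint : ∀ u v, u ∈ Set.Iio (t₀ + Tpre) → v ∈ Set.Iio (t₀ + Tpre) →
      IntervalIntegrable E MeasureTheory.volume u v := by
    intro u v hu hv
    apply ContinuousOn.intervalIntegrable
    apply hEco.mono
    intro x hx
    rcases Set.mem_uIcc.mp hx with hx | hx
    · exact lt_of_le_of_lt hx.2 hv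
    · exact lt_of_le_of_lt hx.2 hu
  have hGderiv : ∀ τ ∈ Set.Iio (t₀ + Tpre), HasDerivAt G (E τ) τ := by
    intro τ hτ
    exact intervalIntegral.integral_hasDerivAt_right
      (hEint t₀ τ (by simp only [Set.mem_Iio]; linarith) hτ)
      (hEco.stronglyMeasurableAtFilter isOpen_Iio τ hτ)
      (hEca τ hτ)
  -- the integrating-factor function
  set F : ℝ → ℝ := fun τ => h τ * Real.exp (c * Φ τ) - g t₀ * G τ with hFdef
  have hFderiv : ∀ τ ∈ Set.Icc t₀ t,
      HasDerivAt F (h' τ * Real.exp (c * Φ τ) +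
        h τ * (Real.exp (c * Φ τ) * (c * φ τ)) - g t₀ * E τ) τ := by
    intro τ hτ
    have hτIio := hIccIio hτ
    have h1 : HasDerivAt (fun u => Real.exp (c * Φ u)) (Real.exp (c * Φ τ) * (c * φ τ)) τ :=
      (((hΦderiv τ hτIio).const_mul c).exp)
    exact (((hderiv τ (hIccIco hτ)).mul h1).sub ((hGderiv τ hτIio).const_mul (g t₀)))
  have hFcont : ContinuousOn F (Set.Icc t₀ t) := fun τ hτ =>
    ((hFderiv τ hτ).continuousAt).continuousWithinAt
  have hFmono : MonotoneOn F (Set.Icc t₀ t) := by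
    apply monotoneOn_of_deriv_nonneg (convex_Icc t₀ t) hFcont
    · intro τ hτ
      rw [interior_Icc] at hτ
      exact (hFderiv τ (Set.mem_Icc_of_Ioo hτ)).differentiableAt.differentiableWithinAt
    · intro τ hτ
      rw [interior_Icc] at hτ
      have hτI : τ ∈ Set.Icc t₀ t := Set.mem_Icc_of_Ioo hτ
      rw [(hFderiv τ hτI).deriv]
      have hode' := hode τ (hIccIco hτI)
      have hglb' := hglb τ (hIccIco hτI)
      have key : h' τ * Real.exp (c * Φ τ) + h τ * (Real.exp (c * Φ τ) * (c * φ τ))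
          = g τ * Real.exp (c * Φ τ) := by
        rw [← hode']; ring
      rw [key]
      have hexp : Real.exp (-c' * Φ τ) * Real.exp (c * Φ τ) = E τ := by
        rw [← Real.exp_add, hEdef]; congr 1; ring
      have : g t₀ * E τ ≤ g τ * Real.exp (c * Φ τ) := by
        rw [← hexp, ← mul_assoc]
        exact mul_le_mul_of_nonneg_right hglb' (Real.exp_pos _).le
      linarith
  have hF0 : F t₀ = h t₀ := by
    simp [hFdef, hΦdef, hGdef, intervalIntegral.integral_same]
  have hmain : h t₀ ≤ h t * Real.exp (c * Φ t) - g t₀ * G t := by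
    have := hFmono (Set.left_mem_Icc.mpr hta) (Set.mem_Icc.mpr ⟨hta, le_refl t⟩) hta
    rw [hF0] at this
    exact this
  -- rewrite the target integral
  have htIio : t ∈ Set.Iio (t₀ + Tpre) := htb
  have hint_congr : (∫ τ in t₀..t,
      Real.exp (-(c * (∫ s in τ..t, φ s) + c' * ∫ s in t₀..τ, φ s)))
      = G t * Real.exp (-(c * Φ t)) := by
    have h1 : ∀ τ ∈ Set.uIcc t₀ t,
        Real.exp (-(c * (∫ s in τ..t, φ s) + c' * ∫ s in t₀..τ, φ s))
        = E τ * Real.exp (-(c * Φ t)) := by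
      intro τ hτ
      rw [Set.uIcc_of_le hta] at hτ
      have hτIio := hIccIio hτ
      have hadd : Φ τ + (∫ s in τ..t, φ s) = Φ t :=
        intervalIntegral.integral_add_adjacent_intervals
          (hφint t₀ τ (Set.left_mem_Icc.mpr hta) hτ)
          (hφint τ t hτ (Set.right_mem_Icc.mpr hta))
      have : (∫ s in τ..t, φ s) = Φ t - Φ τ := by linarith
      rw [this, hEdef, ← Real.exp_add]
      ring_nf
      congr 1; simp only [hΦdef]; ring
    rw [intervalIntegral.integral_congr h1, intervalIntegral.integral_mul_const]
  rw [hint_congr]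
  have he : (0:ℝ) < Real.exp (c * Φ t) := Real.exp_pos _
  have hexpneg : Real.exp (-c * Φ t) = Real.exp (-(c * Φ t)) := by ring_nf
  rw [hexpneg]
  have hinv : Real.exp (-(c * Φ t)) = (Real.exp (c * Φ t))⁻¹ := by
    rw [Real.exp_neg]
  rw [hinv, ge_iff_le]
  rw [← sub_nonneg] at hmain ⊢
  have : h t - (g t₀ * (G t * (Real.exp (c * Φ t))⁻¹) + h t₀ * (Real.exp (c * Φ t))⁻¹)
      = (h t * Real.exp (c * Φ t) - g t₀ * G t - h t₀) * (Real.exp (c * Φ t))⁻¹ := by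
    field_simp
    ring
  rw [this]
  positivity
end

section
/- (Recursive lower bound for the barrier chain.) Let n ≥ 1, let c₁, …, cₙ be positive reals, and set c̄ = max{c₁,…,cₙ} and c̲ = min{c₁,…,cₙ}. Let h₁, …, hₙ : [t₀, t₀+T_pre) → ℝ be differentiable, satisfying the recursion h_{i+1}(t) = h_i'(t) + c_i·φ(t)·h_i(t) for all i = 1,…,n−1 and all t ∈ [t₀, t₀+T_pre), and suppose hₙ'(t) + cₙ·φ(t)·hₙ(t) ≥ 0 for all t ∈ [t₀, t₀+T_pre). For each j define c_j* = c̄ if h_j(t₀) > 0 and c_j* = c̲ otherwise. Then for every i ∈ {1,…,n} and every t ∈ [t₀, t₀+T_pre): h_i(t) ≥ Σ_{j=i}^{n} h_j(t₀)·((t−t₀)^{j−i}/(j−i)!)·exp(−c_j* ∫_{t₀}^{t} φ(s) ds). -/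
theorem recursive_lower_bound_barrier_chain (t₀ Tpre α : ℝ) (hT : 0 < Tpre) (hα : 0 ≤ α)
    (n : ℕ) (hn : 1 ≤ n) (c : ℕ → ℝ)
    (hc : ∀ i ∈ Finset.Icc 1 n, 0 < c i)
    (h h' : ℕ → ℝ → ℝ)
    (hderiv : ∀ i ∈ Finset.Icc 1 n, ∀ t ∈ Set.Ico t₀ (t₀ + Tpre),
      HasDerivAt (h i) (h' i t) t)
    (hrec : ∀ i ∈ Finset.Icc 1 (n - 1), ∀ t ∈ Set.Ico t₀ (t₀ + Tpre),
      h (i + 1) t = h' i t + c i * blowup t₀ Tpre α t * h i t)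
    (hlast : ∀ t ∈ Set.Ico t₀ (t₀ + Tpre),
      h' n t + c n * blowup t₀ Tpre α t * h n t ≥ 0) :
    ∀ i ∈ Finset.Icc 1 n, ∀ t ∈ Set.Ico t₀ (t₀ + Tpre),
      h i t ≥ ∑ j ∈ Finset.Icc i n,
        h j t₀ * ((t - t₀) ^ (j - i) / (Nat.factorial (j - i) : ℝ)) *
          Real.exp (-(if 0 < h j t₀
              then ((Finset.Icc 1 n).sup' (Finset.nonempty_Icc.mpr hn) c)
              else ((Finset.Icc 1 n).inf' (Finset.nonempty_Icc.mpr hn) c)) *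
            ∫ s in t₀..t, blowup t₀ Tpre α s) := by
  classical
  have hφ_nonneg : ∀ s : ℝ, 0 ≤ blowup t₀ Tpre α s := by
    intro s; unfold blowup; positivity
  set cbar : ℝ := (Finset.Icc 1 n).sup' (Finset.nonempty_Icc.mpr hn) c with hcbar
  set cmin : ℝ := (Finset.Icc 1 n).inf' (Finset.nonempty_Icc.mpr hn) c with hcmin
  set cs : ℕ → ℝ := fun j => if 0 < h j t₀ then cbar else cmin with hcs
  set Φ : ℝ → ℝ := fun t => ∫ s in t₀..t, blowup t₀ Tpre α s with hΦdef
  set S : ℕ → ℝ → ℝ := fun i t => ∑ j ∈ Finset.Icc i n,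
      h j t₀ * ((t - t₀) ^ (j - i) / (Nat.factorial (j - i) : ℝ)) *
        Real.exp (-(cs j) * Φ t) with hSdef
  set S' : ℕ → ℝ → ℝ := fun i x => ∑ j ∈ Finset.Icc i n,
      (h j t₀ * (((j - i : ℕ) : ℝ) * (x - t₀) ^ (j - i - 1) / (Nat.factorial (j - i) : ℝ)) *
          Real.exp (-(cs j) * Φ x)
        + h j t₀ * ((x - t₀) ^ (j - i) / (Nat.factorial (j - i) : ℝ)) *
          (Real.exp (-(cs j) * Φ x) * (-(cs j) * blowup t₀ Tpre α x))) with hS'def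
  have hφ_contOn : ContinuousOn (blowup t₀ Tpre α) (Set.Iio (t₀ + Tpre)) := by
    unfold blowup
    apply ContinuousOn.div (by fun_prop) (by fun_prop)
    intro x hx
    simp only [Set.mem_Iio] at hx
    have h1 : 0 < Tpre + t₀ - x := by linarith
    positivity
  have hΦderiv : ∀ x ∈ Set.Ico t₀ (t₀ + Tpre), HasDerivAt Φ (blowup t₀ Tpre α x) x := by
    intro x hx
    obtain ⟨hx1, hx2⟩ := hx
    have hsub : Set.uIcc t₀ x ⊆ Set.Iio (t₀ + Tpre) := by
      rw [Set.uIcc_of_le hx1]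
      intro y hy; exact lt_of_le_of_lt hy.2 hx2
    have hint : IntervalIntegrable (blowup t₀ Tpre α) MeasureTheory.volume t₀ x :=
      (hφ_contOn.mono hsub).intervalIntegrable
    have hcx : ContinuousAt (blowup t₀ Tpre α) x :=
      hφ_contOn.continuousAt (isOpen_Iio.mem_nhds hx2)
    exact intervalIntegral.integral_hasDerivAt_right hint
      (ContinuousOn.stronglyMeasurableAtFilter isOpen_Iio hφ_contOn x hx2) hcx
  have hSderiv : ∀ i : ℕ, ∀ x ∈ Set.Ico t₀ (t₀ + Tpre), HasDerivAt (S i) (S' i x) x := by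
    intro i x hx
    simp only [hSdef, hS'def]
    apply HasDerivAt.fun_sum
    intro j _
    have h1 : HasDerivAt (fun t : ℝ => (t - t₀) ^ (j - i))
        (((j - i : ℕ) : ℝ) * (x - t₀) ^ (j - i - 1)) x := by
      have := ((hasDerivAt_id x).sub_const t₀).pow (j - i)
      simp only [mul_one, id_eq] at this
      exact this
    have h2 : HasDerivAt (fun t : ℝ => Real.exp (-(cs j) * Φ t))
        (Real.exp (-(cs j) * Φ x) * (-(cs j) * blowup t₀ Tpre α x)) x := by
      have := (Real.hasDerivAt_exp (-(cs j) * Φ x)).comp x ((hΦderiv x hx).const_mul (-(cs j)))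
      exact this
    have h3 := ((h1.div_const (Nat.factorial (j - i) : ℝ)).const_mul (h j t₀)).fun_mul h2
    convert h3 using 1 <;> ring
  have hSzero : ∀ i ∈ Finset.Icc 1 n, S i t₀ = h i t₀ := by
    intro i hi
    obtain ⟨hi1, hi2⟩ := Finset.mem_Icc.mp hi
    have hΦ0 : Φ t₀ = 0 := intervalIntegral.integral_same
    simp only [hSdef]
    rw [Finset.sum_eq_single i]
    · simp [hΦ0]
    · intro j hj hne
      obtain ⟨hj1, _⟩ := Finset.mem_Icc.mp hj
      have : j - i ≠ 0 := by omega
      simp [sub_self, zero_pow this]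
    · intro habs
      exact absurd (Finset.mem_Icc.mpr ⟨le_refl i, hi2⟩) habs
  have hreindex : ∀ i, i ≤ n → ∀ x : ℝ,
      (∑ j ∈ Finset.Icc i n,
        h j t₀ * (((j - i : ℕ) : ℝ) * (x - t₀) ^ (j - i - 1) / (Nat.factorial (j - i) : ℝ)) *
          Real.exp (-(cs j) * Φ x)) = S (i + 1) x := by
    intro i hin x
    simp only [hSdef]
    rw [Finset.Icc_eq_cons_Ioc hin, Finset.sum_cons, ← Finset.Icc_add_one_left_eq_Ioc]
    simp only [Nat.sub_self, Nat.cast_zero, zero_mul, zero_div, mul_zero, zero_mul]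
    rw [zero_add]
    apply Finset.sum_congr rfl
    intro j hj
    obtain ⟨hj1, hj2⟩ := Finset.mem_Icc.mp hj
    have hk : j - i = (j - (i + 1)) + 1 := by omega
    have hk2 : j - i - 1 = j - (i + 1) := by omega
    rw [hk2, hk, Nat.factorial_succ]
    congr 1
    congr 1
    set m := j - (i + 1) with hm
    push_cast
    rw [mul_div_mul_left _ _ (by positivity : ((m : ℝ) + 1) ≠ 0)]
  have hcs_bound : ∀ i ∈ Finset.Icc 1 n, ∀ j : ℕ, h j t₀ * (c i - cs j) ≤ 0 := by
    intro i hi j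
    simp only [hcs]
    by_cases hj : 0 < h j t₀
    · have hle : c i ≤ cbar := Finset.le_sup' c hi
      rw [if_pos hj]
      have : c i - cbar ≤ 0 := by linarith
      exact mul_nonpos_of_nonneg_of_nonpos hj.le this
    · push_neg at hj
      have hge : cmin ≤ c i := Finset.inf'_le c hi
      rw [if_neg (not_lt.mpr hj)]
      have : 0 ≤ c i - cmin := by linarith
      exact mul_nonpos_of_nonpos_of_nonneg hj this
  have step : ∀ i ∈ Finset.Icc 1 n,
      (∀ x ∈ Set.Ico t₀ (t₀ + Tpre), S (i + 1) x ≤ (if i = n then 0 else h (i + 1) x)) →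
      ∀ t ∈ Set.Ico t₀ (t₀ + Tpre), S i t ≤ h i t := by
    intro i hi hnext t ht
    obtain ⟨ht1, ht2⟩ := ht
    obtain ⟨hi1, hi2⟩ := Finset.mem_Icc.mp hi
    have hsub : Set.Icc t₀ t ⊆ Set.Ico t₀ (t₀ + Tpre) := fun y hy =>
      ⟨hy.1, lt_of_le_of_lt hy.2 ht2⟩
    have key : ∀ ε : ℝ, 0 < ε → ∀ x ∈ Set.Ico t₀ t,
        S i x = h i x + ε * (x - t₀) → S' i x < h' i x + ε := by
      intro ε hε x hx heq
      have hxI : x ∈ Set.Ico t₀ (t₀ + Tpre) := ⟨hx.1, lt_of_lt_of_le hx.2 ht2.le⟩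
      have hφx := hφ_nonneg x
      have hxt : t₀ ≤ x := hx.1
      -- split S'
      have hsplit : S' i x = S (i + 1) x + ∑ j ∈ Finset.Icc i n,
          h j t₀ * ((x - t₀) ^ (j - i) / (Nat.factorial (j - i) : ℝ)) *
            (Real.exp (-(cs j) * Φ x) * (-(cs j) * blowup t₀ Tpre α x)) := by
        simp only [hS'def]
        rw [Finset.sum_add_distrib, hreindex i hi2 x]
      -- the remainder together with c i * φ * S i is nonpositive
      have hR : (∑ j ∈ Finset.Icc i n,
            h j t₀ * ((x - t₀) ^ (j - i) / (Nat.factorial (j - i) : ℝ)) *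
              (Real.exp (-(cs j) * Φ x) * (-(cs j) * blowup t₀ Tpre α x)))
            + c i * blowup t₀ Tpre α x * S i x ≤ 0 := by
        simp only [hSdef]
        rw [Finset.mul_sum, ← Finset.sum_add_distrib]
        apply Finset.sum_nonpos
        intro j hj
        have h1 := hcs_bound i hi j
        have h2 : (0 : ℝ) ≤ (x - t₀) ^ (j - i) := pow_nonneg (by linarith) _
        have h3 : (0 : ℝ) < (Nat.factorial (j - i) : ℝ) := by positivity
        have h4 : (0 : ℝ) < Real.exp (-(cs j) * Φ x) := Real.exp_pos _
        have heq2 : h j t₀ * ((x - t₀) ^ (j - i) / (Nat.factorial (j - i) : ℝ)) *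
              (Real.exp (-(cs j) * Φ x) * (-(cs j) * blowup t₀ Tpre α x))
            + c i * blowup t₀ Tpre α x *
              (h j t₀ * ((x - t₀) ^ (j - i) / (Nat.factorial (j - i) : ℝ)) *
                Real.exp (-(cs j) * Φ x))
            = (h j t₀ * (c i - cs j)) *
              ((x - t₀) ^ (j - i) / (Nat.factorial (j - i) : ℝ) * Real.exp (-(cs j) * Φ x) *
                blowup t₀ Tpre α x) := by ring
        rw [heq2]
        apply mul_nonpos_of_nonpos_of_nonneg h1
        positivity
      have hci : 0 < c i := hc i hi
      -- bound S (i+1) x by the next level and conclude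
      by_cases hin : i = n
      · have hempty : S (i + 1) x = 0 := by
          simp only [hSdef, hin]
          rw [Finset.Icc_eq_empty (by omega : ¬ n + 1 ≤ n), Finset.sum_empty]
        have hl := hlast x hxI
        subst hin
        rw [hsplit, hempty, zero_add]
        have hterm : c i * blowup t₀ Tpre α x * S i x
            = c i * blowup t₀ Tpre α x * h i x
              + c i * blowup t₀ Tpre α x * (ε * (x - t₀)) := by rw [heq]; ring
        nlinarith [mul_nonneg (mul_nonneg hci.le hφx) (mul_nonneg hε.le (by linarith : (0:ℝ) ≤ x - t₀))]
      · have hnx := hnext x hxI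
        rw [if_neg hin] at hnx
        have hrx := hrec i (Finset.mem_Icc.mpr ⟨hi1, by omega⟩) x hxI
        rw [hsplit]
        have hterm : c i * blowup t₀ Tpre α x * S i x
            = c i * blowup t₀ Tpre α x * h i x
              + c i * blowup t₀ Tpre α x * (ε * (x - t₀)) := by rw [heq]; ring
        nlinarith [mul_nonneg (mul_nonneg hci.le hφx) (mul_nonneg hε.le (by linarith : (0:ℝ) ≤ x - t₀))]
    have Hε : ∀ ε : ℝ, 0 < ε → S i t ≤ h i t + ε * (t - t₀) := by
      intro ε hε
      have hBd : ∀ x ∈ Set.Icc t₀ t,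
          HasDerivAt (fun y => h i y + ε * (y - t₀)) (h' i x + ε) x := by
        intro x hx
        have hxI : x ∈ Set.Ico t₀ (t₀ + Tpre) := hsub hx
        have := (hderiv i hi x hxI).add (((hasDerivAt_id x).sub_const t₀).const_mul ε)
        simp only [id_eq, mul_one] at this
        exact this
      have hmain := image_le_of_deriv_right_lt_deriv_boundary' (f := S i) (f' := S' i)
        (B := fun y => h i y + ε * (y - t₀)) (B' := fun y => h' i y + ε) (a := t₀) (b := t)
        (fun x hx => (hSderiv i x (hsub hx)).continuousAt.continuousWithinAt)
        (fun x hx => (hSderiv i x (hsub (Set.Ico_subset_Icc_self hx))).hasDerivWithinAt)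
        (by rw [hSzero i hi]; simp)
        (fun x hx => (hBd x hx).continuousAt.continuousWithinAt)
        (fun x hx => (hBd x (Set.Ico_subset_Icc_self hx)).hasDerivWithinAt)
        (fun x hx heqx => key ε hε x hx heqx)
      exact hmain (Set.right_mem_Icc.mpr ht1)
    have hfin : ∀ ε : ℝ, 0 < ε → S i t ≤ h i t + ε := by
      intro ε hε
      have h1 := Hε (ε / Tpre) (by positivity)
      have h2 : (ε / Tpre) * (t - t₀) ≤ ε := by
        rw [div_mul_eq_mul_div, div_le_iff₀ hT]
        nlinarith
      linarith
    exact le_of_forall_pos_le_add hfin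
  have main : ∀ k : ℕ, ∀ i ∈ Finset.Icc 1 n, n - i = k →
      ∀ t ∈ Set.Ico t₀ (t₀ + Tpre), S i t ≤ h i t := by
    intro k
    induction k with
    | zero =>
      intro i hi hk
      obtain ⟨hi1, hi2⟩ := Finset.mem_Icc.mp hi
      have hin : i = n := by omega
      apply step i hi
      intro x hx
      rw [if_pos hin]
      simp only [hSdef, hin]
      rw [Finset.Icc_eq_empty (by omega : ¬ n + 1 ≤ n), Finset.sum_empty]
    | succ k ih =>
      intro i hi hk
      obtain ⟨hi1, hi2⟩ := Finset.mem_Icc.mp hi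
      have hin : i ≠ n := by omega
      apply step i hi
      intro x hx
      rw [if_neg hin]
      exact ih (i + 1) (Finset.mem_Icc.mpr ⟨by omega, by omega⟩) (by omega) x hx
  intro i hi t ht
  have := main (n - i) i hi rfl t ht
  simpa [hSdef, hcs, hΦdef, ge_iff_le] using this
end

section
/- (Prescribed-time safety from an initially unsafe state, deterministic core.) Let n ≥ 1 and let c₁, …, cₙ be positive reals. Let h₁, …, hₙ : [t₀, t₀+T_pre) → ℝ be differentiable, satisfying the recursion h_{i+1}(t) = h_i'(t) + c_i·φ(t)·h_i(t) for all i = 1,…,n−1 and all t ∈ [t₀, t₀+T_pre), and suppose hₙ'(t) + cₙ·φ(t)·hₙ(t) ≥ 0 for all t ∈ [t₀, t₀+T_pre). Then liminf_{t → (t₀+T_pre)⁻} h₁(t) ≥ 0; in particular, if h₁ extends continuously to t₀+T_pre, then h₁(t₀+T_pre) ≥ 0, regardless of the sign of h₁(t₀). -/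
open Filter Set Real

private lemma blowup_eq (t₀ Tpre α t : ℝ) (ht : t < t₀ + Tpre) :
    blowup t₀ Tpre α t = Tpre ^ 2 * ((t₀ + Tpre - t) ^ 2)⁻¹ + α * (t - t₀) ^ 2 := by
  have hne : t₀ + Tpre - t ≠ 0 := by linarith
  have hne' : Tpre + t₀ - t ≠ 0 := by linarith
  unfold blowup
  field_simp
  ring

/-- Gronwall-type lemma with the blowup integrating factor. -/
private lemma gron (t₀ Tpre α : ℝ) (hT : 0 < Tpre) (hα : 0 ≤ α)
    (c : ℝ) (hc : 0 < c) (u u' : ℝ → ℝ)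
    (hu : ∀ t ∈ Set.Ico t₀ (t₀ + Tpre), HasDerivAt u (u' t) t)
    (ε : ℝ) (hε : 0 < ε)
    (hg : ∀ᶠ t in nhdsWithin (t₀ + Tpre) (Set.Iio (t₀ + Tpre)),
      u' t + c * blowup t₀ Tpre α t * u t ≥ -ε) :
    ∀ᶠ t in nhdsWithin (t₀ + Tpre) (Set.Iio (t₀ + Tpre)), u t ≥ -(ε * (Tpre + 1)) := by
  set b := t₀ + Tpre with hb
  -- choose s
  obtain ⟨l, hl, hIoo⟩ := mem_nhdsLT_iff_exists_Ioo_subset.mp hg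
  set s : ℝ := max t₀ ((l + b) / 2) with hs
  have hsl : l < s := lt_of_lt_of_le (by simp only [mem_Iio] at hl; linarith) (le_max_right _ _)
  have hst₀ : t₀ ≤ s := le_max_left _ _
  have hsb : s < b := by
    apply max_lt (by simp [hb]; linarith)
    simp only [mem_Iio] at hl; linarith
  have hgs : ∀ t ∈ Set.Ico s b, u' t + c * blowup t₀ Tpre α t * u t ≥ -ε := by
    intro t ht
    exact hIoo ⟨lt_of_lt_of_le hsl ht.1, ht.2⟩
  -- antiderivative G of blowup
  set G : ℝ → ℝ := fun t => Tpre ^ 2 * (b - t)⁻¹ + α * (t - t₀) ^ 3 / 3 with hG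
  have hGderiv : ∀ t ∈ Set.Ico t₀ b, HasDerivAt G (blowup t₀ Tpre α t) t := by
    intro t ht
    have hne : b - t ≠ 0 := by have := ht.2; intro hh; simp only [mem_Ico] at ht; linarith
    have h1 : HasDerivAt (fun t => b - t) (-1) t := by
      simpa using (hasDerivAt_id t).const_sub b
    have h2 : HasDerivAt (fun t => (b - t)⁻¹) (-(-1) / (b - t) ^ 2) t := h1.inv hne
    have h3 : HasDerivAt (fun t => (t - t₀) ^ 3) (3 * (t - t₀) ^ 2 * 1) t := by
      exact ((hasDerivAt_id t).sub_const t₀).pow 3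
    have h4 : HasDerivAt G (Tpre ^ 2 * (-(-1) / (b - t) ^ 2) + α * (3 * (t - t₀) ^ 2 * 1) / 3) t :=
      ((h2.const_mul (Tpre ^ 2)).add ((h3.const_mul α).div_const 3))
    convert h4 using 1
    rw [blowup_eq t₀ Tpre α t ht.2]
    have hne2 : (b - t) ^ 2 ≠ 0 := pow_ne_zero _ hne
    simp only [hb] at *
    field_simp
  have hGmono : ∀ r t : ℝ, t₀ ≤ r → r ≤ t → t < b → G r ≤ G t := by
    intro r t hr hrt htb
    have h1 : (b - r)⁻¹ ≤ (b - t)⁻¹ := by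
      apply inv_anti₀ (by linarith) (by linarith)
    have h2 : (r - t₀) ^ 3 ≤ (t - t₀) ^ 3 := by
      apply pow_le_pow_left₀ (by linarith) (by linarith)
    simp only [hG]
    have := mul_le_mul_of_nonneg_left h1 (sq_nonneg Tpre)
    have := mul_le_mul_of_nonneg_left h2 hα
    linarith
  -- integrating factor v
  set v : ℝ → ℝ := fun t => Real.exp (c * G t) * u t with hv
  have hvderiv : ∀ t ∈ Set.Ico t₀ b, HasDerivAt v
      (Real.exp (c * G t) * (u' t + c * blowup t₀ Tpre α t * u t)) t := by
    intro t ht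
    have h1 : HasDerivAt (fun t => Real.exp (c * G t))
        (Real.exp (c * G t) * (c * blowup t₀ Tpre α t)) t :=
      (((hGderiv t ht).const_mul c)).exp
    have := h1.mul (hu t ht)
    refine this.congr_deriv ?_
    ring
  -- key inequality on [s, b)
  have key : ∀ t ∈ Set.Ico s b, v s - ε * Real.exp (c * G t) * (t - s) ≤ v t := by
    intro t ht
    rcases ht with ⟨hst, htb⟩
    set w : ℝ → ℝ := fun r => v r + ε * Real.exp (c * G t) * r with hw
    have hsub : Set.Icc s t ⊆ Set.Ico t₀ b := fun r hr =>
      ⟨le_trans hst₀ hr.1, lt_of_le_of_lt hr.2 htb⟩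
    have hwderiv : ∀ r ∈ Set.Icc s t, HasDerivAt w
        (Real.exp (c * G r) * (u' r + c * blowup t₀ Tpre α r * u r)
          + ε * Real.exp (c * G t)) r := by
      intro r hr
      have := (hvderiv r (hsub hr)).add
        ((hasDerivAt_id r).const_mul (ε * Real.exp (c * G t)))
      exact this.congr_deriv (by simp)
    have hmono : MonotoneOn w (Set.Icc s t) := by
      apply monotoneOn_of_deriv_nonneg (convex_Icc s t)
      · intro r hr
        exact (hwderiv r hr).continuousAt.continuousWithinAt
      · intro r hr
        rw [interior_Icc] at hr
        exact (hwderiv r (Ioo_subset_Icc_self hr)).differentiableAt.differentiableWithinAt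
      · intro r hr
        rw [interior_Icc] at hr
        rw [(hwderiv r (Ioo_subset_Icc_self hr)).deriv]
        have hgr := hgs r ⟨le_of_lt hr.1, lt_trans hr.2 htb⟩
        have hGrt : G r ≤ G t := hGmono r t (le_trans hst₀ (le_of_lt hr.1)) (le_of_lt hr.2) htb
        have hexp : Real.exp (c * G r) ≤ Real.exp (c * G t) :=
          Real.exp_le_exp.mpr (mul_le_mul_of_nonneg_left hGrt hc.le)
        have h5 : Real.exp (c * G r) * (-ε) ≤
            Real.exp (c * G r) * (u' r + c * blowup t₀ Tpre α r * u r) :=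
          mul_le_mul_of_nonneg_left hgr (Real.exp_pos _).le
        nlinarith [Real.exp_pos (c * G r), Real.exp_pos (c * G t)]
    have hws : w s ≤ w t := hmono ⟨le_refl s, hst⟩ ⟨hst, le_refl t⟩ hst
    simp only [hw] at hws
    linarith
  -- G tends to infinity
  have htend1 : Tendsto (fun t => b - t) (nhdsWithin b (Set.Iio b)) (nhdsWithin 0 (Set.Ioi 0)) := by
    rw [tendsto_nhdsWithin_iff]
    constructor
    · have h0 : Tendsto (fun t : ℝ => b - t) (nhds b) (nhds (b - b)) :=
        (continuous_const.sub continuous_id).tendsto b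
      rw [sub_self] at h0
      exact h0.mono_left nhdsWithin_le_nhds
    · filter_upwards [eventually_mem_nhdsWithin] with t ht
      exact sub_pos.mpr (mem_Iio.mp ht)
  have htend2 : Tendsto (fun t => Tpre ^ 2 * (b - t)⁻¹) (nhdsWithin b (Set.Iio b)) atTop :=
    (tendsto_inv_nhdsGT_zero.comp htend1).const_mul_atTop (by positivity)
  have hevt₀ : ∀ᶠ t in nhdsWithin b (Set.Iio b), t₀ < t :=
    (eventually_gt_nhds (by simp only [hb]; linarith)).filter_mono nhdsWithin_le_nhds
  have htendG : Tendsto G (nhdsWithin b (Set.Iio b)) atTop := by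
    apply tendsto_atTop_mono' _ _ htend2
    filter_upwards [hevt₀] with t ht
    simp only [hG]
    nlinarith [pow_nonneg (le_of_lt (sub_pos.mpr ht)) 3]
  have htendcG : Tendsto (fun t => c * G t) (nhdsWithin b (Set.Iio b)) atTop :=
    htendG.const_mul_atTop hc
  have htendexp : Tendsto (fun t => v s * Real.exp (-(c * G t)))
      (nhdsWithin b (Set.Iio b)) (nhds 0) := by
    have h1 := Real.tendsto_exp_neg_atTop_nhds_zero.comp htendcG
    have := h1.const_mul (v s)
    simpa using this
  have hev1 : ∀ᶠ t in nhdsWithin b (Set.Iio b), -ε < v s * Real.exp (-(c * G t)) :=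
    htendexp.eventually (eventually_gt_nhds (by linarith))
  have hev2 : ∀ᶠ t in nhdsWithin b (Set.Iio b), s < t :=
    (eventually_gt_nhds hsb).filter_mono nhdsWithin_le_nhds
  have hev3 : ∀ᶠ t in nhdsWithin b (Set.Iio b), t < b := eventually_mem_nhdsWithin
  filter_upwards [hev1, hev2, hev3] with t h1 h2 h3
  have hk := key t ⟨h2.le, h3⟩
  set E := Real.exp (c * G t) with hE
  have hEpos : 0 < E := Real.exp_pos _
  have hts : t - s ≤ Tpre := by
    simp only [hb] at h3
    linarith
  have h1' : -ε ≤ v s * E⁻¹ := by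
    rw [Real.exp_neg] at h1
    exact h1.le
  have hmul := mul_le_mul_of_nonneg_left hk (inv_nonneg.mpr hEpos.le)
  have hEinv : E⁻¹ * (E * u t) = u t := by field_simp
  have hveq : v t = E * u t := rfl
  rw [hveq, hEinv] at hmul
  have hexp2 : E⁻¹ * (v s - ε * E * (t - s)) = v s * E⁻¹ - ε * (t - s) := by
    field_simp
  rw [hexp2] at hmul
  have hts' : ε * (t - s) ≤ ε * Tpre := mul_le_mul_of_nonneg_left hts hε.le
  linarith

theorem prescribed_time_safety_initially_unsafe (t₀ Tpre α : ℝ) (hT : 0 < Tpre) (hα : 0 ≤ α)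
    (n : ℕ) (hn : 1 ≤ n) (c : ℕ → ℝ)
    (hc : ∀ i ∈ Finset.Icc 1 n, 0 < c i)
    (h h' : ℕ → ℝ → ℝ)
    (hderiv : ∀ i ∈ Finset.Icc 1 n, ∀ t ∈ Set.Ico t₀ (t₀ + Tpre),
      HasDerivAt (h i) (h' i t) t)
    (hrec : ∀ i ∈ Finset.Icc 1 (n - 1), ∀ t ∈ Set.Ico t₀ (t₀ + Tpre),
      h (i + 1) t = h' i t + c i * blowup t₀ Tpre α t * h i t)
    (hlast : ∀ t ∈ Set.Ico t₀ (t₀ + Tpre),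
      h' n t + c n * blowup t₀ Tpre α t * h n t ≥ 0) :
    0 ≤ Filter.liminf (h 1) (nhdsWithin (t₀ + Tpre) (Set.Iio (t₀ + Tpre))) ∧
    (ContinuousWithinAt (h 1) (Set.Iio (t₀ + Tpre)) (t₀ + Tpre) →
      0 ≤ h 1 (t₀ + Tpre)) := by
  set b := t₀ + Tpre with hb
  set L := nhdsWithin b (Set.Iio b) with hL
  have hTpre1 : (0:ℝ) < Tpre + 1 := by linarith
  have hmemIco : ∀ᶠ t in L, t ∈ Set.Ico t₀ b := by
    have h1 : ∀ᶠ t in L, t₀ < t :=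
      (eventually_gt_nhds (by simp only [hb]; linarith)).filter_mono nhdsWithin_le_nhds
    have h2 : ∀ᶠ t in L, t < b := eventually_mem_nhdsWithin
    filter_upwards [h1, h2] with t ht1 ht2
    exact ⟨ht1.le, ht2⟩
  have main : ∀ k : ℕ, k < n → ∀ ε > 0, ∀ᶠ t in L, h (n - k) t ≥ -ε := by
    intro k
    induction k with
    | zero =>
      intro _ ε hε
      have hnI : n ∈ Finset.Icc 1 n := by simp [Finset.mem_Icc, hn]
      have hg : ∀ᶠ t in L, h' n t + c n * blowup t₀ Tpre α t * h n t ≥ -(ε / (Tpre + 1)) := by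
        filter_upwards [hmemIco] with t ht
        have := hlast t ht
        have : (0:ℝ) ≤ ε / (Tpre + 1) := by positivity
        linarith [hlast t ht]
      have := gron t₀ Tpre α hT hα (c n) (hc n hnI) (h n) (h' n) (hderiv n hnI)
        (ε / (Tpre + 1)) (by positivity) hg
      simp only [Nat.sub_zero]
      have heq : ε / (Tpre + 1) * (Tpre + 1) = ε := div_mul_cancel₀ ε (ne_of_gt hTpre1)
      filter_upwards [this] with t ht
      rw [heq] at ht
      exact ht
    | succ k ih =>
      intro hk ε hε
      have hk' : k < n := Nat.lt_of_succ_lt hk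
      have hi1 : 1 ≤ n - (k + 1) := by omega
      have hii : n - (k + 1) + 1 = n - k := by omega
      have hIcc1 : n - (k + 1) ∈ Finset.Icc 1 (n - 1) := by
        simp only [Finset.mem_Icc]; omega
      have hIcc2 : n - (k + 1) ∈ Finset.Icc 1 n := by
        simp only [Finset.mem_Icc]; omega
      have ihh := ih hk' (ε / (Tpre + 1)) (by positivity)
      have hg : ∀ᶠ t in L, h' (n - (k + 1)) t
          + c (n - (k + 1)) * blowup t₀ Tpre α t * h (n - (k + 1)) t ≥ -(ε / (Tpre + 1)) := by
        filter_upwards [ihh, hmemIco] with t ht1 ht2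
        have := hrec (n - (k + 1)) hIcc1 t ht2
        rw [hii] at this
        rw [← this]
        exact ht1
      have := gron t₀ Tpre α hT hα (c (n - (k + 1))) (hc _ hIcc2) (h (n - (k + 1)))
        (h' (n - (k + 1))) (hderiv _ hIcc2) (ε / (Tpre + 1)) (by positivity) hg
      have heq : ε / (Tpre + 1) * (Tpre + 1) = ε := div_mul_cancel₀ ε (ne_of_gt hTpre1)
      filter_upwards [this] with t ht
      rw [heq] at ht
      exact ht
  have hfin : ∀ ε > 0, ∀ᶠ t in L, -ε ≤ h 1 t := by
    intro ε hε
    have := main (n - 1) (by omega) ε hε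
    have hone : n - (n - 1) = 1 := by omega
    rw [hone] at this
    filter_upwards [this] with t ht using ht
  constructor
  · rw [Filter.liminf_eq]
    by_cases hbdd : BddAbove {a | ∀ᶠ t in L, a ≤ h 1 t}
    · by_contra hcon
      push_neg at hcon
      have hmem : -(-(sSup {a | ∀ᶠ t in L, a ≤ h 1 t}) / 2) ∈ {a | ∀ᶠ t in L, a ≤ h 1 t} := by
        exact hfin (-(sSup {a | ∀ᶠ t in L, a ≤ h 1 t}) / 2) (by linarith)
      have := le_csSup hbdd hmem
      linarith
    · rw [Real.sSup_of_not_bddAbove hbdd]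
  · intro hcont
    have htends : Tendsto (h 1) L (nhds (h 1 b)) := hcont
    by_contra hcon
    push_neg at hcon
    have := ge_of_tendsto htends (hfin (-(h 1 b) / 2) (by linarith))
    linarith
end

section
/- (Prescribed-time safety from an initially safe state, deterministic core.) Let n ≥ 1 and let c₁, …, cₙ be positive reals. Let h₁, …, hₙ : [t₀, t₀+T_pre) → ℝ be differentiable, satisfying the recursion h_{i+1}(t) = h_i'(t) + c_i·φ(t)·h_i(t) for all i = 1,…,n−1 and all t ∈ [t₀, t₀+T_pre), and suppose hₙ'(t) + cₙ·φ(t)·hₙ(t) ≥ 0 for all t ∈ [t₀, t₀+T_pre). If moreover h₁(t₀) ≥ 0 and h_j(t₀) > 0 for every j = 2,…,n, then h_j(t) > 0 for every j = 2,…,n and every t ∈ [t₀, t₀+T_pre), and h₁(t) ≥ h₁(t₀)·exp(−c₁ ∫_{t₀}^{t} φ(s) ds) ≥ 0 for all t ∈ [t₀, t₀+T_pre). -/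
lemma blowup_contOn (t₀ Tpre α : ℝ) :
    ContinuousOn (blowup t₀ Tpre α) (Set.Iio (t₀ + Tpre)) := by
  intro t ht
  apply ContinuousAt.continuousWithinAt
  apply ContinuousAt.div
  · fun_prop
  · fun_prop
  · have : Tpre + t₀ - t ≠ 0 := by
      simp only [Set.mem_Iio] at ht; intro h0; nlinarith
    exact pow_ne_zero _ this

lemma gronwall (t₀ Tpre α : ℝ) (hT : 0 < Tpre) (cc : ℝ)
    (f f' : ℝ → ℝ)
    (hderiv : ∀ t ∈ Set.Ico t₀ (t₀ + Tpre), HasDerivAt f (f' t) t)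
    (hineq : ∀ t ∈ Set.Ico t₀ (t₀ + Tpre), f' t + cc * blowup t₀ Tpre α t * f t ≥ 0) :
    ∀ t ∈ Set.Ico t₀ (t₀ + Tpre),
      f t ≥ f t₀ * Real.exp (-cc * ∫ s in t₀..t, blowup t₀ Tpre α s) := by
  set φ := blowup t₀ Tpre α with hφ
  have hφc := blowup_contOn t₀ Tpre α
  set F : ℝ → ℝ := fun t => ∫ s in t₀..t, φ s with hF
  have hFd : ∀ t ∈ Set.Ico t₀ (t₀ + Tpre), HasDerivAt F (φ t) t := by
    intro t ht
    obtain ⟨ht1, ht2⟩ := ht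
    have hct : ContinuousAt φ t :=
      hφc.continuousAt (Iio_mem_nhds ht2)
    have hint : IntervalIntegrable φ MeasureTheory.volume t₀ t := by
      apply ContinuousOn.intervalIntegrable
      apply hφc.mono
      rw [Set.uIcc_of_le ht1]
      intro x hx
      exact lt_of_le_of_lt hx.2 ht2
    exact intervalIntegral.integral_hasDerivAt_right hint
      (hφc.stronglyMeasurableAtFilter isOpen_Iio t (Set.mem_Iio.mpr ht2)) hct
  set g : ℝ → ℝ := fun t => f t * Real.exp (cc * F t) with hg
  have hgd : ∀ t ∈ Set.Ico t₀ (t₀ + Tpre),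
      HasDerivAt g ((f' t + cc * φ t * f t) * Real.exp (cc * F t)) t := by
    intro t ht
    have h1 : HasDerivAt (fun s => Real.exp (cc * F s)) (cc * φ t * Real.exp (cc * F t)) t := by
      have := (((hFd t ht).const_mul cc).exp)
      convert this using 1
      ring
    have : HasDerivAt (fun y => f y * Real.exp (cc * F y))
        (f' t * Real.exp (cc * F t) + f t * (cc * φ t * Real.exp (cc * F t))) t :=
      (hderiv t ht).fun_mul h1
    convert this using 1
    ring
  have hmono : MonotoneOn g (Set.Ico t₀ (t₀ + Tpre)) := by
    apply monotoneOn_of_deriv_nonneg (convex_Ico _ _)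
    · intro t ht
      exact ((hgd t ht).continuousAt).continuousWithinAt
    · intro t ht
      rw [interior_Ico] at ht
      exact (hgd t (Set.Ioo_subset_Ico_self ht)).differentiableAt.differentiableWithinAt
    · intro t ht
      rw [interior_Ico] at ht
      have ht' := Set.Ioo_subset_Ico_self ht
      rw [(hgd t ht').deriv]
      exact mul_nonneg (hineq t ht') (Real.exp_pos _).le
  intro t ht
  have hmem0 : t₀ ∈ Set.Ico t₀ (t₀ + Tpre) := ⟨le_refl _, by linarith⟩
  have hkey : g t₀ ≤ g t := hmono hmem0 ht ht.1
  have hF0 : F t₀ = 0 := by simp [hF]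
  have hkey' : f t₀ ≤ f t * Real.exp (cc * F t) := by
    simpa [hg, hF0] using hkey
  have := mul_le_mul_of_nonneg_right hkey' (Real.exp_pos (-cc * F t)).le
  rw [mul_assoc, ← Real.exp_add] at this
  have hz : cc * F t + -cc * F t = 0 := by ring
  rw [hz, Real.exp_zero, mul_one] at this
  exact this

theorem prescribed_time_safety_initially_safe (t₀ Tpre α : ℝ) (hT : 0 < Tpre) (hα : 0 ≤ α)
    (n : ℕ) (hn : 1 ≤ n) (c : ℕ → ℝ)
    (hc : ∀ i ∈ Finset.Icc 1 n, 0 < c i)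
    (h h' : ℕ → ℝ → ℝ)
    (hderiv : ∀ i ∈ Finset.Icc 1 n, ∀ t ∈ Set.Ico t₀ (t₀ + Tpre),
      HasDerivAt (h i) (h' i t) t)
    (hrec : ∀ i ∈ Finset.Icc 1 (n - 1), ∀ t ∈ Set.Ico t₀ (t₀ + Tpre),
      h (i + 1) t = h' i t + c i * blowup t₀ Tpre α t * h i t)
    (hlast : ∀ t ∈ Set.Ico t₀ (t₀ + Tpre),
      h' n t + c n * blowup t₀ Tpre α t * h n t ≥ 0)
    (h1init : 0 ≤ h 1 t₀)
    (hjinit : ∀ j ∈ Finset.Icc 2 n, 0 < h j t₀) :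
    (∀ j ∈ Finset.Icc 2 n, ∀ t ∈ Set.Ico t₀ (t₀ + Tpre), 0 < h j t) ∧
    (∀ t ∈ Set.Ico t₀ (t₀ + Tpre),
      h 1 t ≥ h 1 t₀ * Real.exp (-(c 1) * ∫ s in t₀..t, blowup t₀ Tpre α s) ∧
      0 ≤ h 1 t₀ * Real.exp (-(c 1) * ∫ s in t₀..t, blowup t₀ Tpre α s)) := by
  have key : ∀ k i, i + k = n → 1 ≤ i →
      ∀ t ∈ Set.Ico t₀ (t₀ + Tpre),
        h' i t + c i * blowup t₀ Tpre α t * h i t ≥ 0 := by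
    intro k
    induction k with
    | zero =>
      intro i hi _ t ht
      have : i = n := by omega
      subst this
      exact hlast t ht
    | succ k ih =>
      intro i hi h1i t ht
      have hS := ih (i + 1) (by omega) (by omega)
      have hpos : 0 < h (i + 1) t := by
        have hinit : 0 < h (i + 1) t₀ :=
          hjinit (i + 1) (Finset.mem_Icc.mpr ⟨by omega, by omega⟩)
        have hgr := gronwall t₀ Tpre α hT (c (i + 1)) (h (i + 1)) (h' (i + 1))
          (fun s hs => hderiv (i + 1) (Finset.mem_Icc.mpr ⟨by omega, by omega⟩) s hs)
          hS t ht
        have hex := mul_pos hinit (Real.exp_pos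
          (-(c (i + 1)) * ∫ s in t₀..t, blowup t₀ Tpre α s))
        calc (0:ℝ) < h (i + 1) t₀ * Real.exp (-(c (i + 1)) * ∫ s in t₀..t, blowup t₀ Tpre α s) := hex
        _ ≤ h (i + 1) t := hgr
      have heq := hrec i (Finset.mem_Icc.mpr ⟨by omega, by omega⟩) t ht
      rw [heq] at hpos
      linarith
  constructor
  · intro j hj t ht
    rw [Finset.mem_Icc] at hj
    have hS := key (n - j) j (by omega) (by omega)
    have hgr := gronwall t₀ Tpre α hT (c j) (h j) (h' j)
      (fun s hs => hderiv j (Finset.mem_Icc.mpr ⟨by omega, by omega⟩) s hs) hS t ht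
    have hinit := hjinit j (Finset.mem_Icc.mpr ⟨hj.1, hj.2⟩)
    have hex := mul_pos hinit (Real.exp_pos (-(c j) * ∫ s in t₀..t, blowup t₀ Tpre α s))
    linarith
  · intro t ht
    have hS := key (n - 1) 1 (by omega) le_rfl
    have hgr := gronwall t₀ Tpre α hT (c 1) (h 1) (h' 1)
      (fun s hs => hderiv 1 (Finset.mem_Icc.mpr ⟨le_rfl, hn⟩) s hs) hS t ht
    exact ⟨hgr, mul_nonneg h1init (Real.exp_pos _).le⟩
end
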